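/- Let Λ ⊆ ℂ be a lattice and let ω, ω' ∈ ℂ be nonzero with ω·Λ ⊆ Λ and ω'·Λ ⊆ Λ. Suppose k is a positive integer with ω^k = −ω'^k. Then for every n ≥ 0, the diagonal Δ' satisfies (φ_ω × φ_{ω'})^{n+k}(Δ') = (φ_ω × φ_{ω'})^{n}(Δ') (so Δ' is pre-periodic with pair (n,k)), but ([ω] × [ω'])^{n+k}(Δ) ≠ ([ω] × [ω'])^{n}(Δ) (so Δ is not pre-periodic with the pair (n,k)). -/

import Mathlib

open Complex

noncomputable section

/-- The analytic model `E = ℂ/Λ` of an elliptic curve with period lattice `Λ`. -/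
abbrev EC (Λ : AddSubgroup ℂ) : Type := ℂ ⧸ Λ

/-- The endomorphism `[ω] : E → E` induced by multiplication by `ω` on `ℂ`,
for `ω` with `ω·Λ ⊆ Λ`. -/
def mulE (Λ : AddSubgroup ℂ) (ω : ℂ) (hω : ∀ x ∈ Λ, ω * x ∈ Λ) : EC Λ →+ EC Λ :=
  QuotientAddGroup.map Λ Λ (AddMonoidHom.mulLeft ω) (fun x hx => hω x hx)

/-- The relation identifying a point of `E` with its negative. -/
def negRel (Λ : AddSubgroup ℂ) (x y : EC Λ) : Prop := x = y ∨ x = -y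

/-- The quotient `E/±` of `E` by the involution `z ↦ -z`. -/
abbrev ECpm (Λ : AddSubgroup ℂ) : Type := Quot (negRel Λ)

/-- The quotient map `q : E → E/±`. -/
def qpm (Λ : AddSubgroup ℂ) : EC Λ → ECpm Λ := Quot.mk _

/-- The Lattès-type map `φ_ω : E/± → E/±` induced by `[ω]`. -/
def lattes (Λ : AddSubgroup ℂ) (ω : ℂ) (hω : ∀ x ∈ Λ, ω * x ∈ Λ) :
    ECpm Λ → ECpm Λ :=
  Quot.map (mulE Λ ω hω) (by
    intro x y h
    rcases h with h | h
    · exact Or.inl (by rw [h])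
    · exact Or.inr (by rw [h, map_neg]))

/- Auxiliary lemmas -/

lemma mulE_mk (Λ : AddSubgroup ℂ) (ω : ℂ) (hω : ∀ x ∈ Λ, ω * x ∈ Λ) (z : ℂ) :
    mulE Λ ω hω (QuotientAddGroup.mk z) = QuotientAddGroup.mk (ω * z) := rfl

lemma mulE_iterate_mk (Λ : AddSubgroup ℂ) (ω : ℂ) (hω : ∀ x ∈ Λ, ω * x ∈ Λ) (m : ℕ) (z : ℂ) :
    (⇑(mulE Λ ω hω))^[m] (QuotientAddGroup.mk z) = QuotientAddGroup.mk (ω ^ m * z) := by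
  induction m generalizing z with
  | zero => simp
  | succ m ih =>
    rw [Function.iterate_succ_apply, mulE_mk, ih]
    congr 1
    ring

lemma lattes_iterate_mk (Λ : AddSubgroup ℂ) (ω : ℂ) (hω : ∀ x ∈ Λ, ω * x ∈ Λ) (m : ℕ)
    (x : EC Λ) : (lattes Λ ω hω)^[m] (qpm Λ x) = qpm Λ ((⇑(mulE Λ ω hω))^[m] x) := by
  induction m generalizing x with
  | zero => rfl
  | succ m ih =>
    rw [Function.iterate_succ_apply, Function.iterate_succ_apply]
    exact ih _

lemma qpm_neg (Λ : AddSubgroup ℂ) (x : EC Λ) : qpm Λ (-x) = qpm Λ x :=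
  Quot.sound (Or.inr rfl)

lemma pow_mul_mem (Λ : AddSubgroup ℂ) (ω : ℂ) (hω : ∀ x ∈ Λ, ω * x ∈ Λ) (m : ℕ)
    {x : ℂ} (hx : x ∈ Λ) : ω ^ m * x ∈ Λ := by
  induction m with
  | zero => simpa using hx
  | succ m ih => rw [pow_succ', mul_assoc]; exact hω _ ih

lemma image_diag_iterate {α : Type*} (f : α → α) (g : α → α) (m : ℕ) :
    (Prod.map f g)^[m] '' Set.diagonal α = {p | ∃ x, (f^[m] x, g^[m] x) = p} := by
  ext p
  constructor
  · rintro ⟨⟨a, b⟩, hab, rfl⟩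
    cases hab
    exact ⟨a, by simp [Prod.map_iterate]⟩
  · rintro ⟨x, rfl⟩
    exact ⟨(x, x), rfl, by simp [Prod.map_iterate]⟩

/-- If `ω^k = -ω'^k` with `k > 0`, then for every `n` the diagonal `Δ'` is pre-periodic for
`φ_ω × φ_ω'` with pair `(n, k)`, but the diagonal `Δ` is not pre-periodic for `[ω] × [ω']`
with the pair `(n, k)`. -/
theorem lattes_preperiodic_but_not_elliptic_of_pow_eq_neg_pow
    (ω₁ ω₂ : ℂ) (hind : LinearIndependent ℝ ![ω₁, ω₂])
    (Λ : AddSubgroup ℂ) (hΛ : Λ = AddSubgroup.closure {ω₁, ω₂})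
    (ω ω' : ℂ) (hω0 : ω ≠ 0) (hω'0 : ω' ≠ 0)
    (hω : ∀ x ∈ Λ, ω * x ∈ Λ) (hω' : ∀ x ∈ Λ, ω' * x ∈ Λ)
    (k : ℕ) (hk : 0 < k) (hpow : ω ^ k = -ω' ^ k) (n : ℕ) :
    (Prod.map (lattes Λ ω hω) (lattes Λ ω' hω'))^[n + k] '' Set.diagonal (ECpm Λ) =
      (Prod.map (lattes Λ ω hω) (lattes Λ ω' hω'))^[n] '' Set.diagonal (ECpm Λ) ∧
    (Prod.map ⇑(mulE Λ ω hω) ⇑(mulE Λ ω' hω'))^[n + k] '' Set.diagonal (EC Λ) ≠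
      (Prod.map ⇑(mulE Λ ω hω) ⇑(mulE Λ ω' hω'))^[n] '' Set.diagonal (EC Λ) := by
  have hpow' : ω' ^ k = -ω ^ k := by rw [hpow, neg_neg]
  constructor
  · -- the diagonal is pre-periodic on E/±
    rw [image_diag_iterate, image_diag_iterate]
    ext p
    simp only [Set.mem_setOf_eq]
    constructor
    · rintro ⟨x, rfl⟩
      obtain ⟨z, rfl⟩ : ∃ z : ℂ, qpm Λ (QuotientAddGroup.mk z) = x := by
        rcases x with ⟨y⟩
        obtain ⟨z, rfl⟩ := QuotientAddGroup.mk_surjective y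
        exact ⟨z, rfl⟩
      refine ⟨qpm Λ (QuotientAddGroup.mk (ω ^ k * z)), ?_⟩
      rw [lattes_iterate_mk, lattes_iterate_mk, lattes_iterate_mk, lattes_iterate_mk,
        mulE_iterate_mk, mulE_iterate_mk, mulE_iterate_mk, mulE_iterate_mk]
      congr 1
      · rw [← mul_assoc, ← pow_add]
      · have : ω' ^ n * (ω ^ k * z) = -(ω' ^ (n + k) * z) := by
          rw [hpow]; ring
        rw [this, QuotientAddGroup.mk_neg, qpm_neg]
    · rintro ⟨x, rfl⟩
      obtain ⟨z, rfl⟩ : ∃ z : ℂ, qpm Λ (QuotientAddGroup.mk z) = x := by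
        rcases x with ⟨y⟩
        obtain ⟨w, rfl⟩ := QuotientAddGroup.mk_surjective y
        exact ⟨w, rfl⟩
      refine ⟨qpm Λ (QuotientAddGroup.mk (z / ω ^ k)), ?_⟩
      rw [lattes_iterate_mk, lattes_iterate_mk, lattes_iterate_mk, lattes_iterate_mk,
        mulE_iterate_mk, mulE_iterate_mk, mulE_iterate_mk, mulE_iterate_mk]
      have hωk : (ω : ℂ) ^ k ≠ 0 := pow_ne_zero _ hω0
      have h1 : ω ^ (n + k) * (z / ω ^ k) = ω ^ n * z := by
        field_simp [pow_add]
        ring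
      congr 1
      · rw [h1]
      · have : ω' ^ (n + k) * (z / ω ^ k) = -(ω' ^ n * z) := by
          field_simp [pow_add, hpow']
          rw [pow_add, hpow']; ring
        rw [this, QuotientAddGroup.mk_neg, qpm_neg]
  · -- the diagonal is not pre-periodic on E
    intro heq
    set c : ℂ := 2 * (ω ^ n * ω' ^ n * ω' ^ k) with hc
    have hcne : c ≠ 0 := by
      simp [hc, hω0, hω'0, pow_ne_zero]
    -- every complex number times c lies in Λ
    have key : ∀ z : ℂ, c * z ∈ Λ := by
      intro z
      have hmem : ((QuotientAddGroup.mk (ω ^ n * z) : EC Λ),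
          (QuotientAddGroup.mk (ω' ^ n * z) : EC Λ)) ∈
          (Prod.map ⇑(mulE Λ ω hω) ⇑(mulE Λ ω' hω'))^[n] '' Set.diagonal (EC Λ) := by
        rw [image_diag_iterate]
        exact ⟨QuotientAddGroup.mk z, by rw [mulE_iterate_mk, mulE_iterate_mk]⟩
      rw [← heq, image_diag_iterate] at hmem
      obtain ⟨x, hx⟩ := hmem
      obtain ⟨w, rfl⟩ := QuotientAddGroup.mk_surjective x
      rw [mulE_iterate_mk, mulE_iterate_mk] at hx
      have h1 : -(ω ^ (n + k) * w) + ω ^ n * z ∈ Λ := by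
        rw [← QuotientAddGroup.eq]
        exact congrArg Prod.fst hx
      have h2 : -(ω' ^ (n + k) * w) + ω' ^ n * z ∈ Λ := by
        rw [← QuotientAddGroup.eq]
        exact congrArg Prod.snd hx
      have h3 := pow_mul_mem Λ ω' hω' (n + k) h1
      have h4 := pow_mul_mem Λ ω hω (n + k) h2
      have h5 := Λ.sub_mem h3 h4
      have : ω' ^ (n + k) * (-(ω ^ (n + k) * w) + ω ^ n * z) -
          ω ^ (n + k) * (-(ω' ^ (n + k) * w) + ω' ^ n * z) = c * z := by
        rw [hc, pow_add, pow_add, hpow]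
        ring
      rwa [this] at h5
    -- but ω₁/2 ∉ Λ, contradiction
    have hmem : (ω₁ / 2 : ℂ) ∈ Λ := by
      have := key (ω₁ / (2 * c))
      have h : c * (ω₁ / (2 * c)) = ω₁ / 2 := by
        field_simp
      rwa [h] at this
    rw [hΛ, AddSubgroup.mem_closure_pair] at hmem
    obtain ⟨a, b, hab⟩ := hmem
    have hab' : ((a : ℝ) - 1/2) • ω₁ + (b : ℝ) • ω₂ = 0 := by
      rw [zsmul_eq_mul, zsmul_eq_mul] at hab
      rw [sub_smul, Complex.real_smul, Complex.real_smul, Complex.real_smul]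
      push_cast at hab ⊢
      linear_combination hab
    have := LinearIndependent.pair_iff.mp hind _ _ hab'
    have ha : (a : ℝ) = 1/2 := by linarith [this.1, sub_eq_zero.mp this.1]
    have h2a : ((2 * a : ℤ) : ℝ) = 1 := by push_cast; linarith
    have : (2 * a : ℤ) = 1 := by exact_mod_cast h2a
    omega
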